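/- Let X^n be the stationary geometric-sticky Markov chain with parameter α and base distribution p. For distinct x, y ∈ X and indices 2 ≤ m1, m1+1 = m2 ≤ n−1, the probability that X_{m1} = x, X_{m2} = y, and neither x nor y appears at any other index equals (1−α)³·p_x·p_y·(1−p_x−p_y)²·(1−(1−α)(p_x+p_y))^{n−4}. -/
import Mathlib

open scoped Classical

/-- The probability that the stationary geometric-sticky Markov chain with stickiness
parameter `α` and base distribution `p` (i.e. `X_1 ~ p` and
`Pr(X_i = z | X_{i-1} = y) = α·1[z=y] + (1-α)·p z`) produces the sample path `x`. -/
noncomputable def stickyProb {X : Type*} [DecidableEq X] (α : ℝ) (p : X → ℝ) {n : ℕ}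
    (x : Fin n → X) : ℝ :=
  (if h : 0 < n then p (x ⟨0, h⟩) else 1) *
  ∏ i : Fin n, if i.val = 0 then 1 else
    ((if x i = x ⟨i.val - 1, lt_of_le_of_lt (Nat.pred_le _) i.isLt⟩ then α else 0)
      + (1 - α) * p (x i))

section Helpers

variable {X : Type*} [DecidableEq X]

/-- Transition kernel. -/
noncomputable def Tk (α : ℝ) (p : X → ℝ) (w z : X) : ℝ :=
  (if z = w then α else 0) + (1 - α) * p z

/-- Product of transition factors along a path. -/
noncomputable def Wp (α : ℝ) (p : X → ℝ) {n : ℕ} (x : Fin n → X) : ℝ :=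
  ∏ i : Fin n, if i.val = 0 then 1 else
    Tk α p (x ⟨i.val - 1, lt_of_le_of_lt (Nat.pred_le _) i.isLt⟩) (x i)

lemma stickyProb_def (α : ℝ) (p : X → ℝ) {n : ℕ} (hn : 0 < n) (x : Fin n → X) :
    stickyProb α p x = p (x ⟨0, hn⟩) * Wp α p x := by
  unfold stickyProb Wp
  rw [dif_pos hn]
  rfl

lemma cons_mk {n : ℕ} (z : X) (y : Fin n → X) (k : ℕ) (h : k < n + 1)
    (hk : k ≠ 0) : (Fin.cons z y : Fin (n+1) → X) ⟨k, h⟩ = y ⟨k - 1, by omega⟩ := by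
  have : (⟨k, h⟩ : Fin (n + 1)) = Fin.succ ⟨k - 1, by omega⟩ := by
    ext; simp; omega
  rw [this, Fin.cons_succ]

lemma snoc_mk {n : ℕ} (y : Fin n → X) (z : X) (k : ℕ) (h : k < n + 1)
    (hk : k < n) : (Fin.snoc y z : Fin (n+1) → X) ⟨k, h⟩ = y ⟨k, hk⟩ := by
  have : (⟨k, h⟩ : Fin (n + 1)) = Fin.castSucc ⟨k, hk⟩ := rfl
  rw [this, Fin.snoc_castSucc]

lemma snoc_mk_last {n : ℕ} (y : Fin n → X) (z : X) (h : n < n + 1) :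
    (Fin.snoc y z : Fin (n+1) → X) ⟨n, h⟩ = z := by
  have : (⟨n, h⟩ : Fin (n + 1)) = Fin.last n := rfl
  rw [this, Fin.snoc_last]

lemma Wp_pairs (α : ℝ) (p : X → ℝ) {n : ℕ} (x : Fin (n + 1) → X) :
    Wp α p x = ∏ i : Fin n, Tk α p (x i.castSucc) (x i.succ) := by
  unfold Wp
  rw [Fin.prod_univ_succ]
  simp only [Fin.val_zero, if_pos rfl, if_true, one_mul]
  apply Finset.prod_congr rfl
  intro i _
  have h1 : (i.succ.val : ℕ) ≠ 0 := by simp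
  rw [if_neg h1]
  rfl

lemma Wp_cons (α : ℝ) (p : X → ℝ) {n : ℕ} (z : X) (x : Fin (n + 1) → X) :
    Wp α p (Fin.cons z x) = Tk α p z (x 0) * Wp α p x := by
  rw [Wp_pairs, Wp_pairs, Fin.prod_univ_succ]
  refine congrArg₂ (· * ·) (by simp) (Finset.prod_congr rfl fun i _ => ?_)
  rw [← Fin.succ_castSucc, Fin.cons_succ, Fin.cons_succ]

lemma Wp_snoc (α : ℝ) (p : X → ℝ) {n : ℕ} (x : Fin (n + 1) → X) (z : X) :
    Wp α p (Fin.snoc x z) = Wp α p x * Tk α p (x (Fin.last n)) z := by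
  rw [Wp_pairs, Wp_pairs, Fin.prod_univ_castSucc]
  refine congrArg₂ (· * ·) (Finset.prod_congr rfl fun i _ => ?_) (by simp)
  rw [Fin.succ_castSucc, Fin.snoc_castSucc, Fin.snoc_castSucc]

lemma Wp_one (α : ℝ) (p : X → ℝ) (x : Fin 1 → X) : Wp α p x = 1 := by
  unfold Wp
  simp

lemma sum_cons [Fintype X] {n : ℕ} (f : (Fin (n + 1) → X) → ℝ) :
    ∑ x : Fin (n + 1) → X, f x = ∑ z : X, ∑ y : Fin n → X, f (Fin.cons z y) := by
  calc ∑ x : Fin (n + 1) → X, f x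
      = ∑ zy : X × (Fin n → X), f (Fin.cons zy.1 zy.2) :=
        (Fintype.sum_equiv (Fin.consEquiv fun _ => X) _ _ fun zy => rfl).symm
    _ = ∑ z : X, ∑ y : Fin n → X, f (Fin.cons z y) := Fintype.sum_prod_type _

lemma sum_snoc [Fintype X] {n : ℕ} (f : (Fin (n + 1) → X) → ℝ) :
    ∑ x : Fin (n + 1) → X, f x = ∑ z : X, ∑ y : Fin n → X, f (Fin.snoc y z) := by
  calc ∑ x : Fin (n + 1) → X, f x
      = ∑ zy : X × (Fin n → X), f (Fin.snoc zy.2 zy.1) :=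
        (Fintype.sum_equiv (Fin.snocEquiv fun _ => X) _ _ fun zy => rfl).symm
    _ = ∑ z : X, ∑ y : Fin n → X, f (Fin.snoc y z) := Fintype.sum_prod_type _

/-- The event: `a` at position `m1 - 1`, `b` at position `m1`, neither elsewhere. -/
def Cnd (m1 : ℕ) {n : ℕ} (h1 : m1 - 1 < n) (h2 : m1 < n) (a b : X) (x : Fin n → X) : Prop :=
  x ⟨m1 - 1, h1⟩ = a ∧ x ⟨m1, h2⟩ = b ∧
    ∀ i : Fin n, i.val ≠ m1 - 1 → i.val ≠ m1 → x i ≠ a ∧ x i ≠ b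

section Sums

variable [Fintype X] (α : ℝ) (p : X → ℝ) (a b : X)

lemma L1 (hsum : ∑ z, p z = 1) (hab : a ≠ b) :
    ∑ z, (if z ≠ a ∧ z ≠ b then p z else 0) = 1 - p a - p b := by
  have key : ∀ z : X, (if z ≠ a ∧ z ≠ b then p z else 0)
      = p z - (if z = a then p z else 0) - (if z = b then p z else 0) := by
    intro z
    by_cases h1 : z = a
    · subst h1; simp [hab]
    · by_cases h2 : z = b
      · subst h2; simp [h1]
      · simp [h1, h2]
  rw [Finset.sum_congr rfl fun z _ => key z]
  rw [Finset.sum_sub_distrib, Finset.sum_sub_distrib, hsum,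
    Finset.sum_ite_eq' Finset.univ a p, Finset.sum_ite_eq' Finset.univ b p]
  simp

lemma L2 (hsum : ∑ z, p z = 1) (hab : a ≠ b) (w : X) (hwa : w ≠ a) (hwb : w ≠ b) :
    ∑ z, (if z ≠ a ∧ z ≠ b then Tk α p w z else 0) = 1 - (1 - α) * (p a + p b) := by
  have key : ∀ z : X, (if z ≠ a ∧ z ≠ b then Tk α p w z else 0)
      = (if z = w then α else 0) + (1 - α) * (if z ≠ a ∧ z ≠ b then p z else 0) := by
    intro z
    unfold Tk
    by_cases h : z ≠ a ∧ z ≠ b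
    · rw [if_pos h, if_pos h]
    · rw [if_neg h, if_neg h]
      have hz : z ≠ w := by rintro rfl; exact h ⟨hwa, hwb⟩
      rw [if_neg hz]; ring
  rw [Finset.sum_congr rfl fun z _ => key z, Finset.sum_add_distrib,
    Finset.sum_ite_eq' Finset.univ w (fun _ => α), if_pos (Finset.mem_univ w),
    ← Finset.mul_sum, L1 p a b hsum hab]
  ring

lemma L3 (hsum : ∑ z, p z = 1) (hab : a ≠ b) :
    ∑ z, (if z ≠ a ∧ z ≠ b then Tk α p b z else 0) = (1 - α) * (1 - p a - p b) := by
  have key : ∀ z : X, (if z ≠ a ∧ z ≠ b then Tk α p b z else 0)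
      = (1 - α) * (if z ≠ a ∧ z ≠ b then p z else 0) := by
    intro z
    unfold Tk
    by_cases h : z ≠ a ∧ z ≠ b
    · rw [if_pos h, if_pos h, if_neg h.2, zero_add]
    · rw [if_neg h, if_neg h]; ring
  rw [Finset.sum_congr rfl fun z _ => key z, ← Finset.mul_sum, L1 p a b hsum hab]

lemma L4a (hsum : ∑ z, p z = 1) (hab : a ≠ b) (w : X) (hwa : w ≠ a) (hwb : w ≠ b) :
    ∑ z, (if z ≠ a ∧ z ≠ b then p z * Tk α p z w else 0)
      = p w * (1 - (1 - α) * (p a + p b)) := by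
  have key : ∀ z : X, (if z ≠ a ∧ z ≠ b then p z * Tk α p z w else 0)
      = (if z = w then α * p z else 0) + (1 - α) * p w * (if z ≠ a ∧ z ≠ b then p z else 0) := by
    intro z
    unfold Tk
    by_cases h : z ≠ a ∧ z ≠ b
    · rw [if_pos h, if_pos h]
      by_cases hz : z = w
      · subst hz; rw [if_pos rfl, if_pos rfl]; ring
      · rw [if_neg hz, if_neg (fun hh => hz hh.symm)]; ring
    · rw [if_neg h, if_neg h]
      have hz : z ≠ w := by rintro rfl; exact h ⟨hwa, hwb⟩
      rw [if_neg hz]; ring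
  rw [Finset.sum_congr rfl fun z _ => key z, Finset.sum_add_distrib,
    Finset.sum_ite_eq' Finset.univ w (fun z => α * p z), if_pos (Finset.mem_univ w),
    ← Finset.mul_sum, L1 p a b hsum hab]
  ring

lemma L4b (hsum : ∑ z, p z = 1) (hab : a ≠ b) :
    ∑ z, (if z ≠ a ∧ z ≠ b then p z * Tk α p z a else 0)
      = (1 - α) * p a * (1 - p a - p b) := by
  have key : ∀ z : X, (if z ≠ a ∧ z ≠ b then p z * Tk α p z a else 0)
      = (1 - α) * p a * (if z ≠ a ∧ z ≠ b then p z else 0) := by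
    intro z
    unfold Tk
    by_cases h : z ≠ a ∧ z ≠ b
    · rw [if_pos h, if_pos h, if_neg (fun hh => h.1 hh.symm)]; ring
    · rw [if_neg h, if_neg h]; ring
  rw [Finset.sum_congr rfl fun z _ => key z, ← Finset.mul_sum, L1 p a b hsum hab]

end Sums

lemma cnd_cons_iff {N m1 : ℕ} (hm1 : 3 ≤ m1) (h1 : m1 - 1 < N + 1) (h2 : m1 < N + 1)
    (h1' : m1 - 1 - 1 < N) (h2' : m1 - 1 < N) (a b : X) (z : X) (y : Fin N → X) :
    Cnd m1 h1 h2 a b (Fin.cons z y) ↔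
      ((z ≠ a ∧ z ≠ b) ∧ Cnd (m1 - 1) h1' h2' a b y) := by
  unfold Cnd
  have e1 : (Fin.cons z y : Fin (N+1) → X) ⟨m1 - 1, h1⟩ = y ⟨m1 - 1 - 1, h1'⟩ := by
    rw [cons_mk z y (m1 - 1) h1 (by omega)]
  have e2 : (Fin.cons z y : Fin (N+1) → X) ⟨m1, h2⟩ = y ⟨m1 - 1, h2'⟩ := by
    rw [cons_mk z y m1 h2 (by omega)]
  rw [e1, e2]
  constructor
  · rintro ⟨ha, hb, hf⟩
    refine ⟨?_, ha, hb, ?_⟩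
    · exact hf ⟨0, by omega⟩ (show (0:ℕ) ≠ m1 - 1 by omega) (show (0:ℕ) ≠ m1 by omega)
    · intro i hi1 hi2
      have hi1' : i.val ≠ m1 - 1 - 1 := hi1
      have hi2' : i.val ≠ m1 - 1 := hi2
      exact hf ⟨i.val + 1, by omega⟩
        (show i.val + 1 ≠ m1 - 1 by omega) (show i.val + 1 ≠ m1 by omega)
  · rintro ⟨⟨hza, hzb⟩, ha, hb, hf⟩
    refine ⟨ha, hb, ?_⟩
    intro i hi1 hi2
    obtain ⟨iv, hiv⟩ := i
    have hi1' : iv ≠ m1 - 1 := hi1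
    have hi2' : iv ≠ m1 := hi2
    cases iv with
    | zero => exact ⟨hza, hzb⟩
    | succ k =>
      exact hf ⟨k, by omega⟩ (show k ≠ m1 - 1 - 1 by omega) (show k ≠ m1 - 1 by omega)

lemma cnd_snoc_iff {N m1 : ℕ} (hm1 : 2 ≤ m1) (hm2 : m1 + 1 < N)
    (h1 : m1 - 1 < N + 1) (h2 : m1 < N + 1)
    (h1' : m1 - 1 < N) (h2' : m1 < N) (a b : X) (y : Fin N → X) (z : X) :
    Cnd m1 h1 h2 a b (Fin.snoc y z) ↔
      ((z ≠ a ∧ z ≠ b) ∧ Cnd m1 h1' h2' a b y) := by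
  unfold Cnd
  have e1 : (Fin.snoc y z : Fin (N+1) → X) ⟨m1 - 1, h1⟩ = y ⟨m1 - 1, h1'⟩ :=
    snoc_mk y z (m1 - 1) h1 h1'
  have e2 : (Fin.snoc y z : Fin (N+1) → X) ⟨m1, h2⟩ = y ⟨m1, h2'⟩ :=
    snoc_mk y z m1 h2 h2'
  rw [e1, e2]
  constructor
  · rintro ⟨ha, hb, hf⟩
    refine ⟨?_, ha, hb, ?_⟩
    · have := hf ⟨N, by omega⟩ (show N ≠ m1 - 1 by omega) (show N ≠ m1 by omega)
      rwa [snoc_mk_last y z (by omega)] at this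
    · intro i hi1 hi2
      have hi1' : i.val ≠ m1 - 1 := hi1
      have hi2' : i.val ≠ m1 := hi2
      have := hf ⟨i.val, by omega⟩ (show i.val ≠ m1 - 1 by omega) (show i.val ≠ m1 by omega)
      rwa [snoc_mk y z i.val (by omega) i.isLt, Fin.eta] at this
  · rintro ⟨⟨hza, hzb⟩, ha, hb, hf⟩
    refine ⟨ha, hb, ?_⟩
    intro i hi1 hi2
    obtain ⟨iv, hiv⟩ := i
    have hi1' : iv ≠ m1 - 1 := hi1
    have hi2' : iv ≠ m1 := hi2
    by_cases hivN : iv = N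
    · subst hivN
      rw [snoc_mk_last y z hiv]
      exact ⟨hza, hzb⟩
    · rw [snoc_mk y z iv hiv (by omega)]
      exact hf ⟨iv, by omega⟩ hi1' hi2'

lemma cnd_fst {N m1 : ℕ} (h1 : m1 - 1 < N) (h2 : m1 < N) (hm1 : 2 ≤ m1) (h0 : 0 < N)
    (a b : X) (y : Fin N → X) (h : Cnd m1 h1 h2 a b y) :
    y ⟨0, h0⟩ ≠ a ∧ y ⟨0, h0⟩ ≠ b :=
  h.2.2 ⟨0, h0⟩ (show (0:ℕ) ≠ m1 - 1 by omega) (show (0:ℕ) ≠ m1 by omega)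

lemma cnd_last {N m1 : ℕ} (h1 : m1 - 1 < N) (h2 : m1 < N) (hm1 : 2 ≤ m1)
    (hm2 : m1 + 1 ≤ N - 1) (hL : N - 1 < N)
    (a b : X) (y : Fin N → X) (h : Cnd m1 h1 h2 a b y) :
    y ⟨N - 1, hL⟩ ≠ a ∧ y ⟨N - 1, hL⟩ ≠ b :=
  h.2.2 ⟨N - 1, hL⟩ (show N - 1 ≠ m1 - 1 by omega) (show N - 1 ≠ m1 by omega)

end Helpers

theorem sticky_aux {X : Type*} [Fintype X] [DecidableEq X] (α : ℝ) (p : X → ℝ)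
    (hsum : ∑ z, p z = 1) (a b : X) (hab : a ≠ b) :
    ∀ n : ℕ, 4 ≤ n → ∀ m1 : ℕ, 2 ≤ m1 → m1 + 1 ≤ n - 1 →
      ∀ (h1 : m1 - 1 < n) (h2 : m1 < n),
      (∑ x : Fin n → X, if Cnd m1 h1 h2 a b x then stickyProb α p x else 0)
        = (1 - α) ^ 3 * p a * p b * (1 - p a - p b) ^ 2
            * (1 - (1 - α) * (p a + p b)) ^ (n - 4) := by
  intro n
  induction n using Nat.strong_induction_on with
  | _ n ih =>
  intro hn m1 hm1 hm2 h1 h2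
  by_cases hm3 : 3 ≤ m1
  · -- peel the first coordinate
    obtain ⟨M, rfl⟩ : ∃ M, n = M + 2 := ⟨n - 2, by omega⟩
    have h1' : m1 - 1 - 1 < M + 1 := by omega
    have h2' : m1 - 1 < M + 1 := by omega
    have h0 : 0 < M + 1 := by omega
    have key : ∀ z : X, ∀ y : Fin (M + 1) → X,
        (if Cnd m1 h1 h2 a b (Fin.cons z y) then stickyProb α p (Fin.cons z y) else 0)
        = if ((z ≠ a ∧ z ≠ b) ∧ Cnd (m1 - 1) h1' h2' a b y)
            then p z * (Tk α p z (y ⟨0, h0⟩) * Wp α p y) else 0 := by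
      intro z y
      refine if_congr (cnd_cons_iff hm3 h1 h2 h1' h2' a b z y) ?_ rfl
      rw [stickyProb_def α p (by omega) (Fin.cons z y), Wp_cons]
      rfl
    calc (∑ x : Fin (M + 2) → X, if Cnd m1 h1 h2 a b x then stickyProb α p x else 0)
        = ∑ z : X, ∑ y : Fin (M + 1) → X,
            (if ((z ≠ a ∧ z ≠ b) ∧ Cnd (m1 - 1) h1' h2' a b y)
              then p z * (Tk α p z (y ⟨0, h0⟩) * Wp α p y) else 0) := by
          rw [sum_cons]
          exact Finset.sum_congr rfl fun z _ => Finset.sum_congr rfl fun y _ => key z y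
      _ = ∑ y : Fin (M + 1) → X, ∑ z : X,
            (if ((z ≠ a ∧ z ≠ b) ∧ Cnd (m1 - 1) h1' h2' a b y)
              then p z * (Tk α p z (y ⟨0, h0⟩) * Wp α p y) else 0) := Finset.sum_comm
      _ = ∑ y : Fin (M + 1) → X,
            (if Cnd (m1 - 1) h1' h2' a b y
              then (1 - (1 - α) * (p a + p b)) * stickyProb α p y else 0) := by
          refine Finset.sum_congr rfl fun y _ => ?_
          by_cases hC : Cnd (m1 - 1) h1' h2' a b y
          · obtain ⟨hya, hyb⟩ := cnd_fst h1' h2' (by omega) h0 a b y hC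
            rw [if_pos hC]
            calc (∑ z : X, if ((z ≠ a ∧ z ≠ b) ∧ Cnd (m1 - 1) h1' h2' a b y)
                    then p z * (Tk α p z (y ⟨0, h0⟩) * Wp α p y) else 0)
                = ∑ z : X, (if (z ≠ a ∧ z ≠ b)
                    then p z * Tk α p z (y ⟨0, h0⟩) else 0) * Wp α p y := by
                  refine Finset.sum_congr rfl fun z _ => ?_
                  by_cases hz : z ≠ a ∧ z ≠ b
                  · rw [if_pos ⟨hz, hC⟩, if_pos hz]; ring
                  · rw [if_neg (fun hh => hz hh.1), if_neg hz, zero_mul]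
              _ = (∑ z : X, if (z ≠ a ∧ z ≠ b)
                    then p z * Tk α p z (y ⟨0, h0⟩) else 0) * Wp α p y :=
                  (Finset.sum_mul _ _ _).symm
              _ = (p (y ⟨0, h0⟩) * (1 - (1 - α) * (p a + p b))) * Wp α p y := by
                  rw [L4a α p a b hsum hab (y ⟨0, h0⟩) hya hyb]
              _ = (1 - (1 - α) * (p a + p b)) * stickyProb α p y := by
                  rw [stickyProb_def α p h0 y]; ring
          · rw [if_neg hC]
            exact Finset.sum_eq_zero fun z _ => if_neg (fun hh => hC hh.2)
      _ = (1 - (1 - α) * (p a + p b)) * ∑ y : Fin (M + 1) → X,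
            (if Cnd (m1 - 1) h1' h2' a b y then stickyProb α p y else 0) := by
          rw [Finset.mul_sum]
          exact Finset.sum_congr rfl fun y _ => by
            by_cases hC : Cnd (m1 - 1) h1' h2' a b y
            · rw [if_pos hC, if_pos hC]
            · rw [if_neg hC, if_neg hC, mul_zero]
      _ = (1 - α) ^ 3 * p a * p b * (1 - p a - p b) ^ 2
            * (1 - (1 - α) * (p a + p b)) ^ (M + 2 - 4) := by
          rw [ih (M + 1) (by omega) (by omega) (m1 - 1) (by omega) (by omega) h1' h2']
          have hE : M + 2 - 4 = (M + 1 - 4) + 1 := by omega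
          rw [hE, pow_succ]
          ring
  · -- m1 = 2
    have hm1e : m1 = 2 := by omega
    subst hm1e
    by_cases hn4 : n = 4
    · -- base case n = 4, m1 = 2
      subst hn4
      have hTab : Tk α p a b = (1 - α) * p b := by
        unfold Tk
        rw [if_neg (fun h => hab h.symm), zero_add]
      calc (∑ x : Fin 4 → X, if Cnd 2 h1 h2 a b x then stickyProb α p x else 0)
          = ∑ z0 : X, ∑ z1 : X, ∑ z2 : X, ∑ z3 : X,
              (if (z1 = a ∧ z2 = b ∧ (z0 ≠ a ∧ z0 ≠ b) ∧ (z3 ≠ a ∧ z3 ≠ b))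
                then p z0 * (Tk α p z0 z1 * (Tk α p z1 z2 * (Tk α p z2 z3 * 1))) else 0) := by
            refine (sum_cons _).trans (Finset.sum_congr rfl fun z0 _ => ?_)
            refine (sum_cons _).trans (Finset.sum_congr rfl fun z1 _ => ?_)
            refine (sum_cons _).trans (Finset.sum_congr rfl fun z2 _ => ?_)
            refine (sum_cons _).trans (Finset.sum_congr rfl fun z3 _ => ?_)
            rw [Fintype.sum_unique]
            refine if_congr ?_ ?_ rfl
            · unfold Cnd
              constructor
              · rintro ⟨ha', hb', hf⟩
                have c0 := hf ⟨0, show (0:ℕ) < 4 by omega⟩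
                  (show (0:ℕ) ≠ 2 - 1 by omega) (show (0:ℕ) ≠ 2 by omega)
                have c3 := hf ⟨3, show (3:ℕ) < 4 by omega⟩
                  (show (3:ℕ) ≠ 2 - 1 by omega) (show (3:ℕ) ≠ 2 by omega)
                exact ⟨ha', hb', c0, c3⟩
              · rintro ⟨ha', hb', ⟨h0a, h0b⟩, ⟨h3a, h3b⟩⟩
                refine ⟨ha', hb', ?_⟩
                rintro ⟨iv, hiv⟩ hi1 hi2
                have hi1' : iv ≠ 2 - 1 := hi1
                have hi2' : iv ≠ 2 := hi2
                interval_cases iv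
                · exact ⟨h0a, h0b⟩
                · exact absurd rfl hi1'
                · exact absurd rfl hi2'
                · exact ⟨h3a, h3b⟩
            · rw [stickyProb_def α p (by norm_num)
                (Fin.cons z0 (Fin.cons z1 (Fin.cons z2 (Fin.cons z3 default)))),
                Wp_cons, Wp_cons, Wp_cons, Wp_one]
              rfl
        _ = ∑ z0 : X, ∑ z2 : X, ∑ z3 : X,
              (if (z2 = b ∧ (z0 ≠ a ∧ z0 ≠ b) ∧ (z3 ≠ a ∧ z3 ≠ b))
                then p z0 * (Tk α p z0 a * (Tk α p a z2 * (Tk α p z2 z3 * 1))) else 0) := by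
            refine Finset.sum_congr rfl fun z0 _ => ?_
            calc (∑ z1 : X, ∑ z2 : X, ∑ z3 : X,
                  (if (z1 = a ∧ z2 = b ∧ (z0 ≠ a ∧ z0 ≠ b) ∧ (z3 ≠ a ∧ z3 ≠ b))
                    then p z0 * (Tk α p z0 z1 * (Tk α p z1 z2 * (Tk α p z2 z3 * 1))) else 0))
                = ∑ z1 : X, (if z1 = a then ∑ z2 : X, ∑ z3 : X,
                    (if (z2 = b ∧ (z0 ≠ a ∧ z0 ≠ b) ∧ (z3 ≠ a ∧ z3 ≠ b))
                      then p z0 * (Tk α p z0 z1 * (Tk α p z1 z2 * (Tk α p z2 z3 * 1))) else 0)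
                    else 0) := by
                  refine Finset.sum_congr rfl fun z1 _ => ?_
                  by_cases h : z1 = a
                  · rw [if_pos h]
                    exact Finset.sum_congr rfl fun z2 _ => Finset.sum_congr rfl fun z3 _ =>
                      if_congr (by simp [h]) rfl rfl
                  · rw [if_neg h]
                    exact Finset.sum_eq_zero fun z2 _ => Finset.sum_eq_zero fun z3 _ =>
                      if_neg (fun hh => h hh.1)
              _ = _ := by
                  rw [Finset.sum_ite_eq' Finset.univ a _, if_pos (Finset.mem_univ a)]
        _ = ∑ z0 : X, ∑ z3 : X,
              (if ((z0 ≠ a ∧ z0 ≠ b) ∧ (z3 ≠ a ∧ z3 ≠ b))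
                then p z0 * (Tk α p z0 a * (Tk α p a b * (Tk α p b z3 * 1))) else 0) := by
            refine Finset.sum_congr rfl fun z0 _ => ?_
            calc (∑ z2 : X, ∑ z3 : X,
                  (if (z2 = b ∧ (z0 ≠ a ∧ z0 ≠ b) ∧ (z3 ≠ a ∧ z3 ≠ b))
                    then p z0 * (Tk α p z0 a * (Tk α p a z2 * (Tk α p z2 z3 * 1))) else 0))
                = ∑ z2 : X, (if z2 = b then ∑ z3 : X,
                    (if ((z0 ≠ a ∧ z0 ≠ b) ∧ (z3 ≠ a ∧ z3 ≠ b))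
                      then p z0 * (Tk α p z0 a * (Tk α p a z2 * (Tk α p z2 z3 * 1))) else 0)
                    else 0) := by
                  refine Finset.sum_congr rfl fun z2 _ => ?_
                  by_cases h : z2 = b
                  · rw [if_pos h]
                    exact Finset.sum_congr rfl fun z3 _ => if_congr (by simp [h]) rfl rfl
                  · rw [if_neg h]
                    exact Finset.sum_eq_zero fun z3 _ => if_neg (fun hh => h hh.1)
              _ = _ := by
                  rw [Finset.sum_ite_eq' Finset.univ b _, if_pos (Finset.mem_univ b)]
        _ = (∑ z0 : X, if (z0 ≠ a ∧ z0 ≠ b) then p z0 * Tk α p z0 a else 0) *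
              ((∑ z3 : X, if (z3 ≠ a ∧ z3 ≠ b) then Tk α p b z3 else 0) * Tk α p a b) := by
            rw [Finset.sum_mul]
            refine Finset.sum_congr rfl fun z0 _ => ?_
            rw [Finset.sum_mul, Finset.mul_sum]
            refine Finset.sum_congr rfl fun z3 _ => ?_
            by_cases hA : z0 ≠ a ∧ z0 ≠ b
            · by_cases hB : z3 ≠ a ∧ z3 ≠ b
              · rw [if_pos (⟨hA, hB⟩ : (z0 ≠ a ∧ z0 ≠ b) ∧ (z3 ≠ a ∧ z3 ≠ b)),
                  if_pos hA, if_pos hB]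
                ring
              · rw [if_neg (fun hh => hB hh.2), if_neg hB]
                ring
            · rw [if_neg (fun hh => hA hh.1), if_neg hA]
              ring
        _ = (1 - α) ^ 3 * p a * p b * (1 - p a - p b) ^ 2
              * (1 - (1 - α) * (p a + p b)) ^ (4 - 4) := by
            rw [L4b α p a b hsum hab, L3 α p a b hsum hab, hTab,
              show 4 - 4 = 0 by rfl, pow_zero]
            ring
    · -- peel the last coordinate: n ≥ 5, m1 = 2
      obtain ⟨M, rfl⟩ : ∃ M, n = M + 2 := ⟨n - 2, by omega⟩
      have h1' : 2 - 1 < M + 1 := by omega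
      have h2' : 2 < M + 1 := by omega
      have h0 : 0 < M + 1 := by omega
      have hL : M + 1 - 1 < M + 1 := by omega
      have key : ∀ z : X, ∀ y : Fin (M + 1) → X,
          (if Cnd 2 h1 h2 a b (Fin.snoc y z) then stickyProb α p (Fin.snoc y z) else 0)
          = if ((z ≠ a ∧ z ≠ b) ∧ Cnd 2 h1' h2' a b y)
              then (p (y ⟨0, h0⟩) * Wp α p y) * Tk α p (y ⟨M, by omega⟩) z else 0 := by
        intro z y
        refine if_congr (cnd_snoc_iff (by omega) (by omega) h1 h2 h1' h2' a b y z) ?_ rfl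
        rw [stickyProb_def α p (by omega) (Fin.snoc y z), Wp_snoc,
          snoc_mk y z 0 (by omega) h0]
        have : y (Fin.last M) = y ⟨M, by omega⟩ := rfl
        rw [this]; ring
      calc (∑ x : Fin (M + 2) → X, if Cnd 2 h1 h2 a b x then stickyProb α p x else 0)
          = ∑ z : X, ∑ y : Fin (M + 1) → X,
              (if ((z ≠ a ∧ z ≠ b) ∧ Cnd 2 h1' h2' a b y)
                then (p (y ⟨0, h0⟩) * Wp α p y) * Tk α p (y ⟨M, by omega⟩) z else 0) := by
            rw [sum_snoc]
            exact Finset.sum_congr rfl fun z _ => Finset.sum_congr rfl fun y _ => key z y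
        _ = ∑ y : Fin (M + 1) → X, ∑ z : X,
              (if ((z ≠ a ∧ z ≠ b) ∧ Cnd 2 h1' h2' a b y)
                then (p (y ⟨0, h0⟩) * Wp α p y) * Tk α p (y ⟨M, by omega⟩) z else 0) :=
            Finset.sum_comm
        _ = ∑ y : Fin (M + 1) → X,
              (if Cnd 2 h1' h2' a b y
                then (1 - (1 - α) * (p a + p b)) * stickyProb α p y else 0) := by
            refine Finset.sum_congr rfl fun y _ => ?_
            by_cases hC : Cnd 2 h1' h2' a b y
            · obtain ⟨hya, hyb⟩ := cnd_last h1' h2' (by omega) (by omega) hL a b y hC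
              have hya' : y ⟨M, by omega⟩ ≠ a := hya
              have hyb' : y ⟨M, by omega⟩ ≠ b := hyb
              rw [if_pos hC]
              calc (∑ z : X, if ((z ≠ a ∧ z ≠ b) ∧ Cnd 2 h1' h2' a b y)
                      then (p (y ⟨0, h0⟩) * Wp α p y) * Tk α p (y ⟨M, by omega⟩) z else 0)
                  = ∑ z : X, (p (y ⟨0, h0⟩) * Wp α p y) *
                      (if (z ≠ a ∧ z ≠ b) then Tk α p (y ⟨M, by omega⟩) z else 0) := by
                    refine Finset.sum_congr rfl fun z _ => ?_
                    by_cases hz : z ≠ a ∧ z ≠ b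
                    · rw [if_pos ⟨hz, hC⟩, if_pos hz]
                    · rw [if_neg (fun hh => hz hh.1), if_neg hz, mul_zero]
                _ = (p (y ⟨0, h0⟩) * Wp α p y) *
                      ∑ z : X, (if (z ≠ a ∧ z ≠ b) then Tk α p (y ⟨M, by omega⟩) z else 0) :=
                    (Finset.mul_sum _ _ _).symm
                _ = (1 - (1 - α) * (p a + p b)) * stickyProb α p y := by
                    rw [L2 α p a b hsum hab (y ⟨M, by omega⟩) hya' hyb',
                      stickyProb_def α p h0 y]
                    ring
            · rw [if_neg hC]
              exact Finset.sum_eq_zero fun z _ => if_neg (fun hh => hC hh.2)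
        _ = (1 - (1 - α) * (p a + p b)) * ∑ y : Fin (M + 1) → X,
              (if Cnd 2 h1' h2' a b y then stickyProb α p y else 0) := by
            rw [Finset.mul_sum]
            exact Finset.sum_congr rfl fun y _ => by
              by_cases hC : Cnd 2 h1' h2' a b y
              · rw [if_pos hC, if_pos hC]
              · rw [if_neg hC, if_neg hC, mul_zero]
        _ = (1 - α) ^ 3 * p a * p b * (1 - p a - p b) ^ 2
              * (1 - (1 - α) * (p a + p b)) ^ (M + 2 - 4) := by
            rw [ih (M + 1) (by omega) (by omega) 2 (by omega) (by omega) h1' h2']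
            have hE : M + 2 - 4 = (M + 1 - 4) + 1 := by omega
            rw [hE, pow_succ]
            ring

/-- For the stationary geometric-sticky Markov chain of length `n ≥ 4`, distinct letters
`a ≠ b`, and consecutive interior positions `m1`, `m2 = m1 + 1` with `2 ≤ m1` and
`m1 + 1 ≤ n - 1`, the probability that `X_{m1} = a`, `X_{m2} = b`, and neither `a` nor `b`
appears at any other index equals
`(1-α)³ p_a p_b (1-p_a-p_b)² (1-(1-α)(p_a+p_b))^(n-4)`. -/
theorem sticky_prob_two_singletons_consecutive
    {X : Type*} [Fintype X] [DecidableEq X] (α : ℝ) (hα0 : 0 ≤ α) (hα1 : α < 1)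
    (p : X → ℝ) (hp : ∀ z, 0 ≤ p z) (hsum : ∑ z, p z = 1)
    (n : ℕ) (hn : 4 ≤ n) (m1 : ℕ) (hm1 : 2 ≤ m1) (hm2 : m1 + 1 ≤ n - 1)
    (a b : X) (hab : a ≠ b) :
    ∑ x : Fin n → X,
        (if x ⟨m1 - 1, by omega⟩ = a ∧ x ⟨m1, by omega⟩ = b ∧
            (∀ i : Fin n, i.val ≠ m1 - 1 → i.val ≠ m1 → x i ≠ a ∧ x i ≠ b)
          then stickyProb α p x else 0)
      = (1 - α) ^ 3 * p a * p b * (1 - p a - p b) ^ 2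
          * (1 - (1 - α) * (p a + p b)) ^ (n - 4) := by
  have H := sticky_aux α p hsum a b hab n hn m1 hm1 hm2 (by omega) (by omega)
  refine Eq.trans (Finset.sum_congr rfl fun x _ => ?_) H
  unfold Cnd
  congr
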